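/- Let Ω_B = {X ∈ ℝ^{n₁×n₂} : rank(X) ≤ r, ‖X‖_{r,0} ≤ s₁, ‖Xᵀ‖_{r,0} ≤ s₂, ‖X‖_F ≤ 1}, the set of rank-≤r matrices with at most s₁ nonzero rows and s₂ nonzero columns in the Frobenius unit ball (r ≤ min(s₁,s₂)). Then the upper Minkowski dimension of Ω_B is at most (s₁ + s₂ − r)r. -/

import Mathlib

noncomputable def coveringNumber {E : Type*} [PseudoMetricSpace E] (Ω : Set E) (ρ : ℝ) : ℕ :=
  sInf {k : ℕ | ∃ C : Finset E, C.card = k ∧ Ω ⊆ ⋃ c ∈ C, Metric.closedBall c ρ}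

/-- The upper Minkowski (box-counting) dimension. -/
noncomputable def upperMinkowskiDim {E : Type*} [PseudoMetricSpace E] (Ω : Set E) : ℝ :=
  Filter.limsup (fun ρ : ℝ => Real.log (coveringNumber Ω ρ) / Real.log (1 / ρ))
    (nhdsWithin 0 (Set.Ioi 0))

attribute [local instance] Matrix.frobeniusNormedAddCommGroup

section P1
open Filter Set Finset

section Covering

variable {E : Type*} [PseudoMetricSpace E]

lemma coveringNumber_le_of_cover {Ω : Set E} {ρ : ℝ} (C : Finset E)
    (h : Ω ⊆ ⋃ c ∈ C, Metric.closedBall c ρ) : coveringNumber Ω ρ ≤ C.card :=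
  Nat.sInf_le ⟨C, rfl, h⟩

/-- 1-D grid covering `[-1,1]`. -/
lemma grid1D (m : ℕ) (hm : 0 < m) :
    ∃ F : Finset ℝ, F.card ≤ m + 1 ∧ (∀ y ∈ F, |y| ≤ 1) ∧
      ∀ x : ℝ, |x| ≤ 1 → ∃ y ∈ F, |x - y| ≤ 2 / m := by
  have hm' : (0:ℝ) < m := by exact_mod_cast hm
  refine ⟨(Finset.range (m+1)).image (fun t : ℕ => -1 + 2*t/m), ?_, ?_, ?_⟩
  · exact (Finset.card_image_le).trans (by simp)
  · intro y hy
    simp only [Finset.mem_image, Finset.mem_range] at hy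
    obtain ⟨t, ht, rfl⟩ := hy
    have ht' : (t:ℝ) ≤ m := by exact_mod_cast Nat.lt_succ_iff.mp ht
    rw [abs_le]
    constructor
    · have : 0 ≤ 2*(t:ℝ)/m := by positivity
      linarith
    · have : 2*(t:ℝ)/m ≤ 2 := by
        rw [div_le_iff₀ hm']; nlinarith
      linarith
  · intro x hx
    rw [abs_le] at hx
    set t : ℕ := ⌊(x+1)*m/2⌋₊ with htdef
    have htm : t ≤ m := by
      have h1 : (x+1)*m/2 ≤ (m:ℝ) := by nlinarith
      calc t ≤ ⌊(m:ℝ)⌋₊ := Nat.floor_le_floor h1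
        _ = m := Nat.floor_natCast m
    have h1 : (t:ℝ) ≤ (x+1)*m/2 := Nat.floor_le (by nlinarith)
    have h2 : (x+1)*m/2 < t + 1 := Nat.lt_floor_add_one _
    refine ⟨-1 + 2*t/m, Finset.mem_image.mpr ⟨t, Finset.mem_range.mpr (Nat.lt_succ_iff.mpr htm), rfl⟩, ?_⟩
    have key : x - (-1 + 2*(t:ℝ)/m) = ((x+1)*m - 2*t)/m := by field_simp; ring
    rw [key, abs_le, show -(2/(m:ℝ)) = (-2)/m by ring, div_le_div_iff_of_pos_right hm',
      div_le_div_iff_of_pos_right hm']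
    constructor <;> nlinarith

/-- Grid covering of the sup-norm cube in `ι → ℝ`. -/
lemma cube_cover {ι : Type*} [Fintype ι] [DecidableEq ι] (m : ℕ) (hm : 0 < m) :
    ∃ G : Finset (ι → ℝ), G.card ≤ (m+1) ^ (Fintype.card ι) ∧
      ∀ p : ι → ℝ, (∀ i, |p i| ≤ 1) →
        ∃ q ∈ G, (∀ i, |q i| ≤ 1) ∧ ∀ i, |p i - q i| ≤ 2 / m := by
  obtain ⟨F, hF1, hF2, hF3⟩ := grid1D m hm
  refine ⟨Fintype.piFinset (fun _ : ι => F), ?_, ?_⟩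
  · rw [Fintype.card_piFinset]
    calc ∏ _i : ι, F.card ≤ ∏ _i : ι, (m+1) := Finset.prod_le_prod (by simp) (fun i _ => hF1)
      _ = (m+1) ^ (Fintype.card ι) := by simp [Finset.prod_const]
  · intro p hp
    choose y hy1 hy2 using fun i => hF3 (p i) (hp i)
    exact ⟨y, Fintype.mem_piFinset.mpr (fun i => hy1 i), fun i => hF2 _ (hy1 i), hy2⟩

/-- Covering the image of the cube under a map that is Lipschitz in the sup metric. -/
lemma cover_image_cube {ι : Type*} [Fintype ι] (φ : (ι → ℝ) → E) (L ρ : ℝ)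
    (hL : 1 ≤ L) (hρ : 0 < ρ)
    (hφ : ∀ c : ℝ, 0 ≤ c → ∀ p q : ι → ℝ, (∀ i, |p i| ≤ 1) → (∀ i, |q i| ≤ 1) →
      (∀ i, |p i - q i| ≤ c) → dist (φ p) (φ q) ≤ L * c) :
    ∃ C : Finset E, C.card ≤ (⌈4 * L / ρ⌉₊ + 1) ^ (Fintype.card ι) ∧
      (φ '' {p | ∀ i, |p i| ≤ 1}) ⊆ ⋃ c ∈ C, Metric.closedBall c ρ := by
  classical
  set m : ℕ := ⌈4 * L / ρ⌉₊ with hmdef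
  have hm : 0 < m := by
    apply Nat.ceil_pos.mpr; positivity
  have hm' : (0:ℝ) < m := by exact_mod_cast hm
  obtain ⟨G, hG1, hG2⟩ := cube_cover (ι := ι) m hm
  refine ⟨G.image φ, (Finset.card_image_le).trans hG1, ?_⟩
  rintro x ⟨p, hp, rfl⟩
  obtain ⟨q, hqG, hq1, hq2⟩ := hG2 p hp
  have hd : dist (φ p) (φ q) ≤ ρ := by
    have := hφ (2/m) (by positivity) p q hp hq1 hq2
    have hmge : 4 * L / ρ ≤ (m:ℝ) := Nat.le_ceil _
    calc dist (φ p) (φ q) ≤ L * (2/m) := this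
      _ ≤ ρ := by
        rw [mul_div_assoc']
        rw [div_le_iff₀ hm']
        rw [div_le_iff₀ hρ] at hmge
        nlinarith
  exact Set.mem_iUnion₂.mpr ⟨φ q, Finset.mem_image_of_mem φ hqG, Metric.mem_closedBall.mpr hd⟩

end Covering
end P1

section P2
open Filter Set Finset
lemma dim_le_of_poly_cover {E : Type*} [PseudoMetricSpace E] (Ω : Set E) (Dn : ℕ)
    (A K : ℝ) (hA : 1 ≤ A) (hK : 1 ≤ K) (hne : Ω.Nonempty)
    (hcov : ∀ ρ : ℝ, 0 < ρ → ρ ≤ 1 → ∃ C : Finset E,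
      (C.card : ℝ) ≤ A * (K / ρ) ^ Dn ∧ Ω ⊆ ⋃ c ∈ C, Metric.closedBall c ρ) :
    upperMinkowskiDim Ω ≤ Dn := by
  have hNlb : ∀ ρ : ℝ, 0 < ρ → (1:ℝ) ≤ coveringNumber Ω ρ := by
    intro ρ hρ
    have : coveringNumber Ω ρ ≠ 0 := by
      intro h0
      rcases le_or_gt ρ 1 with hρ1 | hρ1
      · obtain ⟨C, _, hC2⟩ := hcov ρ hρ hρ1
        have hne' : {k : ℕ | ∃ C : Finset E, C.card = k ∧
            Ω ⊆ ⋃ c ∈ C, Metric.closedBall c ρ}.Nonempty := ⟨C.card, C, rfl, hC2⟩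
        have := Nat.sInf_mem hne'
        rw [show sInf {k : ℕ | ∃ C : Finset E, C.card = k ∧
            Ω ⊆ ⋃ c ∈ C, Metric.closedBall c ρ} = coveringNumber Ω ρ from rfl, h0] at this
        obtain ⟨C₀, hC₀card, hC₀cov⟩ := this
        rw [Finset.card_eq_zero.mp hC₀card] at hC₀cov
        simp only [Finset.notMem_empty, Set.iUnion_of_empty, Set.iUnion_empty] at hC₀cov
        exact absurd (hC₀cov hne.some_mem) (by simp)
      · obtain ⟨C, _, hC2⟩ := hcov 1 one_pos le_rfl
        have hsub : Ω ⊆ ⋃ c ∈ C, Metric.closedBall c ρ := by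
          refine hC2.trans ?_
          apply Set.iUnion₂_mono
          intro c _
          exact Metric.closedBall_subset_closedBall hρ1.le
        have hne' : {k : ℕ | ∃ C : Finset E, C.card = k ∧
            Ω ⊆ ⋃ c ∈ C, Metric.closedBall c ρ}.Nonempty := ⟨C.card, C, rfl, hsub⟩
        have := Nat.sInf_mem hne'
        rw [show sInf {k : ℕ | ∃ C : Finset E, C.card = k ∧
            Ω ⊆ ⋃ c ∈ C, Metric.closedBall c ρ} = coveringNumber Ω ρ from rfl, h0] at this
        obtain ⟨C₀, hC₀card, hC₀cov⟩ := this
        rw [Finset.card_eq_zero.mp hC₀card] at hC₀cov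
        simp only [Finset.notMem_empty, Set.iUnion_of_empty, Set.iUnion_empty] at hC₀cov
        exact absurd (hC₀cov hne.some_mem) (by simp)
    exact_mod_cast Nat.one_le_iff_ne_zero.mpr this
  set f : ℝ → ℝ := fun ρ => Real.log (coveringNumber Ω ρ) / Real.log (1 / ρ) with hf
  have hfnonneg : ∀ ρ : ℝ, 0 < ρ → ρ ≤ 1 → 0 ≤ f ρ := by
    intro ρ h1 h2
    apply div_nonneg
    · exact Real.log_nonneg (hNlb ρ h1)
    · exact Real.log_nonneg (by rw [le_div_iff₀ h1]; linarith)
  set B : ℝ := max (Real.log (A * K ^ Dn)) 0 with hB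
  have hBnn : 0 ≤ B := le_max_right _ _
  have key : ∀ ε : ℝ, 0 < ε → ∀ ρ : ℝ, 0 < ρ → ρ < min (1/2) (Real.exp (-(B/ε + 1))) →
      f ρ ≤ Dn + ε := by
    intro ε hε ρ hρ hρlt
    have hρ1 : ρ ≤ 1 := by
      have := lt_min_iff.mp hρlt
      linarith [this.1]
    have hLpos : B/ε + 1 ≤ Real.log (1/ρ) := by
      have h2 : ρ < Real.exp (-(B/ε + 1)) := (lt_min_iff.mp hρlt).2
      have := Real.log_lt_log hρ h2
      rw [Real.log_exp] at this
      rw [one_div, Real.log_inv]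
      linarith
    have hLpos' : 0 < Real.log (1/ρ) := lt_of_lt_of_le (by positivity) hLpos
    obtain ⟨C, hC1, hC2⟩ := hcov ρ hρ hρ1
    have hNle : (coveringNumber Ω ρ : ℝ) ≤ A * (K/ρ)^Dn :=
      le_trans (by exact_mod_cast coveringNumber_le_of_cover C hC2) hC1
    have h0 : (0:ℝ) < (coveringNumber Ω ρ : ℝ) := lt_of_lt_of_le one_pos (hNlb ρ hρ)
    have hlogN : Real.log (coveringNumber Ω ρ) ≤ B + Dn * Real.log (1/ρ) := by
      have hsplit : A * (K/ρ)^Dn = (A * K^Dn) * (1/ρ)^Dn := by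
        rw [div_pow, one_div, inv_pow]
        field_simp
      calc Real.log (coveringNumber Ω ρ) ≤ Real.log (A * (K/ρ)^Dn) := Real.log_le_log h0 hNle
        _ = Real.log (A * K^Dn) + Real.log ((1/ρ)^Dn) := by
            rw [hsplit, Real.log_mul (by positivity) (by positivity)]
        _ = Real.log (A * K^Dn) + Dn * Real.log (1/ρ) := by rw [Real.log_pow]
        _ ≤ B + Dn * Real.log (1/ρ) := by
            have : Real.log (A * K^Dn) ≤ B := le_max_left _ _
            linarith
    have hfρ : f ρ ≤ B / Real.log (1/ρ) + Dn := by
      rw [hf]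
      have := (div_le_div_iff_of_pos_right hLpos').mpr hlogN
      calc Real.log (coveringNumber Ω ρ) / Real.log (1/ρ)
          ≤ (B + Dn * Real.log (1/ρ)) / Real.log (1/ρ) := this
        _ = B / Real.log (1/ρ) + Dn := by
            rw [add_div, mul_div_assoc, div_self hLpos'.ne', mul_one]
    have hBL : B / Real.log (1/ρ) ≤ ε := by
      rw [div_le_iff₀ hLpos']
      have : ε * (B/ε + 1) ≤ ε * Real.log (1/ρ) := by
        apply mul_le_mul_of_nonneg_left hLpos hε.le
      have hexp : ε * (B/ε + 1) = B + ε := by field_simp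
      linarith
    linarith
  refine le_of_forall_pos_le_add ?_
  intro ε hε
  rw [upperMinkowskiDim]
  have hmempos : (0:ℝ) < min (1/2) (Real.exp (-(B/ε + 1))) := by positivity
  have hmem : Set.Ioo (0:ℝ) (min (1/2) (Real.exp (-(B/ε + 1)))) ∈ nhdsWithin (0:ℝ) (Set.Ioi 0) :=
    Ioo_mem_nhdsGT_of_mem ⟨le_refl 0, hmempos⟩
  have hmem1 : Set.Ioo (0:ℝ) 1 ∈ nhdsWithin (0:ℝ) (Set.Ioi 0) :=
    Ioo_mem_nhdsGT_of_mem ⟨le_refl 0, one_pos⟩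
  apply Filter.limsup_le_of_le
  · apply Filter.IsCoboundedUnder.of_frequently_ge (a := 0)
    apply Filter.Eventually.frequently
    filter_upwards [hmem1] with ρ hρ using hfnonneg ρ hρ.1 hρ.2.le
  · filter_upwards [hmem] with ρ hρ using key ε hε ρ hρ.1 hρ.2

end P2

section P3
open Matrix Set Finset Submodule
lemma exists_good_basis {n₁ n₂ : ℕ} (X : Matrix (Fin n₁) (Fin n₂) ℝ) :
    ∃ g : Fin X.rank → Fin n₂, Function.Injective g ∧
      (∀ a, (fun i => X i (g a)) ≠ 0) ∧
      ∀ j : Fin n₂, ∃ w : Fin X.rank → ℝ, (∀ a, |w a| ≤ 1) ∧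
        ∀ i, X i j = ∑ a, w a * X i (g a) := by
  classical
  set k := X.rank with hk
  have hspan : X.rank = Module.finrank ℝ (span ℝ (Set.range Xᵀ)) :=
    X.rank_eq_finrank_span_cols
  -- Step A : an independent family of k columns
  obtain ⟨b, hbsub, hbspan, hbind⟩ := exists_linearIndependent ℝ (Set.range Xᵀ)
  have hbfin : b.Finite := hbind.setFinite
  haveI : Fintype b := hbfin.fintype
  have hcardb : Fintype.card b = k := by
    rw [← Set.toFinset_card, ← finrank_span_set_eq_card hbind, hbspan, hk, hspan]
  have hidx : ∀ v : b, ∃ j, Xᵀ j = (v : Fin n₁ → ℝ) := fun v => Set.mem_range.mp (hbsub v.2)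
  choose idx hidxspec using hidx
  let e : Fin k ≃ b := (Fintype.equivFinOfCardEq hcardb).symm
  set SA : Fin k → Fin n₂ := fun a => idx (e a) with hSA
  have hindA : LinearIndependent ℝ (fun a => Xᵀ (SA a)) := by
    have heq : (fun a => Xᵀ (SA a)) = (fun a : Fin k => ((e a : b) : Fin n₁ → ℝ)) :=
      funext fun a => hidxspec (e a)
    rw [heq]
    exact hbind.comp e e.injective
  -- the squared-volume function
  set F : (Fin k → Fin n₂) → ℝ :=
    fun S => ((X.submatrix id S)ᵀ * (X.submatrix id S)).det with hF
  have hAx : ∀ (S : Fin k → Fin n₂) (x : Fin k → ℝ),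
      (X.submatrix id S) *ᵥ x = ∑ a, x a • Xᵀ (S a) := by
    intro S x
    funext i
    simp only [Matrix.mulVec, dotProduct, Finset.sum_apply, Pi.smul_apply,
      smul_eq_mul, Matrix.submatrix_apply, id_eq, Matrix.transpose_apply]
    exact Finset.sum_congr rfl fun a _ => mul_comm _ _
  have posdef : ∀ S : Fin k → Fin n₂, LinearIndependent ℝ (fun a => Xᵀ (S a)) → 0 < F S := by
    intro S hind
    have hPD : ((X.submatrix id S)ᵀ * (X.submatrix id S)).PosDef := by
      rw [posDef_iff_dotProduct_mulVec]
      constructor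
      · rw [← conjTranspose_eq_transpose_of_trivial]
        exact isHermitian_conjTranspose_mul_self _
      · intro x hx
        have hAxne : (X.submatrix id S) *ᵥ x ≠ 0 := by
          intro h0
          apply hx
          have := Fintype.linearIndependent_iff.mp hind x (by rw [← hAx]; exact h0)
          funext a; exact this a
        set y := (X.submatrix id S) *ᵥ x with hy
        have hrw : star x ⬝ᵥ (((X.submatrix id S)ᵀ * (X.submatrix id S)) *ᵥ x) = y ⬝ᵥ y := by
          rw [star_trivial, ← Matrix.mulVec_mulVec, Matrix.dotProduct_mulVec,
            Matrix.vecMul_transpose]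
        rw [hrw]
        rcases lt_or_eq_of_le (Finset.sum_nonneg fun i _ => mul_self_nonneg (y i)) with h | h
        · exact h
        · exact absurd (dotProduct_self_eq_zero.mp h.symm) hAxne
    exact hPD.det_pos
  obtain ⟨S₀, -, hS₀max⟩ := Finset.exists_max_image Finset.univ F ⟨SA, Finset.mem_univ _⟩
  have hFpos : 0 < F S₀ := lt_of_lt_of_le (posdef SA hindA) (hS₀max SA (Finset.mem_univ _))
  -- columns of S₀ are independent
  have hA₀inj : ∀ x : Fin k → ℝ, (X.submatrix id S₀) *ᵥ x = 0 → x = 0 := by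
    intro x hx0
    have hunit : IsUnit ((X.submatrix id S₀)ᵀ * (X.submatrix id S₀)) :=
      (Matrix.isUnit_iff_isUnit_det _).mpr (isUnit_iff_ne_zero.mpr hFpos.ne')
    have hinj := Matrix.mulVec_injective_iff_isUnit.mpr hunit
    apply hinj
    rw [← Matrix.mulVec_mulVec, hx0]
    simp
  have hind₀ : LinearIndependent ℝ (fun a => Xᵀ (S₀ a)) := by
    rw [Fintype.linearIndependent_iff]
    intro g hg
    have : (X.submatrix id S₀) *ᵥ g = 0 := by rw [hAx]; exact hg
    have := hA₀inj g this
    intro a; rw [this]; simp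
  -- columns of S₀ span the column space
  have hle : span ℝ (Set.range (fun a => Xᵀ (S₀ a))) ≤ span ℝ (Set.range Xᵀ) := by
    apply span_le.mpr
    rintro v ⟨a, rfl⟩
    exact subset_span ⟨S₀ a, rfl⟩
  have hfr : Module.finrank ℝ (span ℝ (Set.range (fun a => Xᵀ (S₀ a)))) = k := by
    rw [finrank_span_eq_card hind₀, Fintype.card_fin]
  have heqspan : span ℝ (Set.range (fun a => Xᵀ (S₀ a))) = span ℝ (Set.range Xᵀ) := by
    apply Submodule.eq_of_le_of_finrank_le hle
    rw [hfr, ← hspan]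
  refine ⟨S₀, ?_, ?_, ?_⟩
  · intro a b hab
    exact hind₀.injective (by rw [hab])
  · intro a
    have := hind₀.ne_zero a
    intro h0
    apply this
    funext i
    exact congrFun h0 i
  · intro j
    have hmem : Xᵀ j ∈ span ℝ (Set.range (fun a => Xᵀ (S₀ a))) := by
      rw [heqspan]; exact subset_span ⟨j, rfl⟩
    obtain ⟨c, hc⟩ := (mem_span_range_iff_exists_fun ℝ).mp hmem
    have hcoord : ∀ i, X i j = ∑ a, c a * X i (S₀ a) := by
      intro i
      have := congrFun hc i
      simp only [Finset.sum_apply, Pi.smul_apply, smul_eq_mul, Matrix.transpose_apply] at this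
      rw [← this]
    refine ⟨c, ?_, hcoord⟩
    intro a
    -- determinant swap argument
    set Emat : Matrix (Fin k) (Fin k) ℝ := (1 : Matrix (Fin k) (Fin k) ℝ).updateCol a c
      with hE
    have hdetE : Emat.det = c a := by
      rw [hE, ← Matrix.cramer_apply, Matrix.cramer_one]
      rfl
    have hprod : X.submatrix id (Function.update S₀ a j) = X.submatrix id S₀ * Emat := by
      ext i b
      rw [Matrix.mul_apply]
      by_cases hb : b = a
      · subst hb
        simp only [Matrix.submatrix_apply, id_eq, Function.update_self, hE,
          Matrix.updateCol_self]
        rw [hcoord i]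
        exact Finset.sum_congr rfl fun d _ => mul_comm _ _
      · simp only [Matrix.submatrix_apply, id_eq, Function.update_of_ne hb, hE,
          Matrix.updateCol_ne hb]
        rw [Finset.sum_eq_single b]
        · simp
        · intro d _ hd
          simp [Matrix.one_apply, hd]
        · intro h; exact absurd (Finset.mem_univ b) h
    have hFS' : F (Function.update S₀ a j) = (c a)^2 * F S₀ := by
      rw [hF]
      simp only
      rw [hprod, Matrix.transpose_mul, show Ematᵀ * (X.submatrix id S₀)ᵀ *
        (X.submatrix id S₀ * Emat) = Ematᵀ * ((X.submatrix id S₀)ᵀ *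
        (X.submatrix id S₀)) * Emat by simp only [Matrix.mul_assoc], Matrix.det_mul, Matrix.det_mul,
        Matrix.det_transpose, hdetE]
      ring
    have hle' : F (Function.update S₀ a j) ≤ F S₀ := hS₀max _ (Finset.mem_univ _)
    rw [hFS'] at hle'
    have : (c a)^2 ≤ 1 := by
      by_contra hgt
      push_neg at hgt
      nlinarith
    exact (sq_le_one_iff_abs_le_one (c a)).mp this

end P3

section P4
open Matrix Finset
section NormHelpers

lemma entry_abs_le_norm {a b : ℕ} (M : Matrix (Fin a) (Fin b) ℝ) (i : Fin a) (j : Fin b) :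
    |M i j| ≤ ‖M‖ := by
  rw [Matrix.frobenius_norm_def]
  have h1 : |M i j| ^ (2:ℝ) ≤ ∑ i', ∑ j', ‖M i' j'‖ ^ (2:ℝ) := by
    calc |M i j| ^ (2:ℝ) = ‖M i j‖ ^ (2:ℝ) := by rw [Real.norm_eq_abs]
      _ ≤ ∑ j', ‖M i j'‖ ^ (2:ℝ) :=
          Finset.single_le_sum (fun j' _ => Real.rpow_nonneg (norm_nonneg _) _)
            (Finset.mem_univ j)
      _ ≤ ∑ i', ∑ j', ‖M i' j'‖ ^ (2:ℝ) :=
          Finset.single_le_sum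
            (fun i' _ => Finset.sum_nonneg fun j' _ => Real.rpow_nonneg (norm_nonneg _) _)
            (Finset.mem_univ i)
  calc |M i j| = (|M i j| ^ (2:ℝ)) ^ ((1:ℝ)/2) := by
        rw [← Real.rpow_mul (abs_nonneg _)]; norm_num
    _ ≤ (∑ i', ∑ j', ‖M i' j'‖ ^ (2:ℝ)) ^ ((1:ℝ)/2) :=
        Real.rpow_le_rpow (Real.rpow_nonneg (abs_nonneg _) _) h1 (by norm_num)

lemma norm_le_card_mul {a b : ℕ} (M : Matrix (Fin a) (Fin b) ℝ) (c : ℝ) (hc : 0 ≤ c)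
    (h : ∀ i j, |M i j| ≤ c) : ‖M‖ ≤ (a*b : ℕ) * c := by
  rw [Matrix.frobenius_norm_def]
  have h1 : ∑ i, ∑ j, ‖M i j‖ ^ (2:ℝ) ≤ (a*b : ℕ) * c ^ (2:ℝ) := by
    calc ∑ i, ∑ j, ‖M i j‖ ^ (2:ℝ) ≤ ∑ _i : Fin a, ∑ _j : Fin b, c ^ (2:ℝ) := by
          apply Finset.sum_le_sum; intro i _
          apply Finset.sum_le_sum; intro j _
          exact Real.rpow_le_rpow (norm_nonneg _) (by rw [Real.norm_eq_abs]; exact h i j)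
            (by norm_num)
      _ = (a*b : ℕ) * c ^ (2:ℝ) := by
          simp [Finset.sum_const, mul_comm, mul_assoc, mul_left_comm]
  calc (∑ i, ∑ j, ‖M i j‖ ^ (2:ℝ)) ^ ((1:ℝ)/2)
      ≤ ((a*b : ℕ) * c ^ (2:ℝ)) ^ ((1:ℝ)/2) := by
        apply Real.rpow_le_rpow ?_ h1 (by norm_num)
        exact Finset.sum_nonneg fun i _ =>
          Finset.sum_nonneg fun j _ => Real.rpow_nonneg (norm_nonneg _) _
    _ = ((a*b : ℕ) : ℝ) ^ ((1:ℝ)/2) * c := by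
        rw [Real.mul_rpow (Nat.cast_nonneg _) (Real.rpow_nonneg hc _),
          ← Real.rpow_mul hc]
        norm_num
    _ ≤ (a*b : ℕ) * c := by
        apply mul_le_mul_of_nonneg_right ?_ hc
        rcases Nat.eq_zero_or_pos (a*b) with h0 | h0
        · rw [h0]; norm_num
        · have h1' : (1:ℝ) ≤ ((a*b : ℕ) : ℝ) := by exact_mod_cast h0
          calc ((a*b : ℕ) : ℝ) ^ ((1:ℝ)/2) ≤ ((a*b : ℕ) : ℝ) ^ (1:ℝ) :=
                Real.rpow_le_rpow_of_exponent_le h1' (by norm_num)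
            _ = ((a*b : ℕ) : ℝ) := Real.rpow_one _

end NormHelpers

/-- Row-placement matrix of an embedding. -/
def placeL {n t : ℕ} (f : Fin t ↪ Fin n) : Matrix (Fin n) (Fin t) ℝ :=
  Matrix.of fun i' i => if f i = i' then 1 else 0

/-- Column-placement matrix of an embedding. -/
def placeR {t n : ℕ} (g : Fin t ↪ Fin n) : Matrix (Fin t) (Fin n) ℝ :=
  Matrix.of fun j j' => if g j = j' then 1 else 0

/-- The parametrization of sparse low-rank matrices. -/
def phiMap (n₁ n₂ t₁ t₂ k : ℕ) (f : Fin t₁ ↪ Fin n₁) (g₁ : Fin k ↪ Fin n₂)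
    (g₂ : Fin (t₂ - k) ↪ Fin n₂) (p : (Fin t₁ × Fin k) ⊕ (Fin k × Fin (t₂ - k)) → ℝ) :
    Matrix (Fin n₁) (Fin n₂) ℝ :=
  placeL f * (Matrix.of fun i a => p (Sum.inl (i, a))) *
    (placeR g₁ + (Matrix.of fun a b => p (Sum.inr (a, b))) * placeR g₂)

/-- A single Lipschitz constant (uniform over `k ≤ r`). -/
def LNat (n₁ n₂ t₁ t₂ r : ℕ) : ℕ :=
  (n₁*t₁) * ((t₁*r) * (r*n₂ + (r*t₂)*(t₂*n₂)) + (t₁*r) * ((r*t₂) * (t₂*n₂))) + 1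

lemma norm_placeL_le {n t : ℕ} (f : Fin t ↪ Fin n) : ‖placeL f‖ ≤ (n*t : ℕ) := by
  have := norm_le_card_mul (placeL f) 1 zero_le_one
    (fun i j => by rw [placeL]; dsimp; split <;> simp)
  simpa using this

lemma norm_placeR_le {t n : ℕ} (g : Fin t ↪ Fin n) : ‖placeR g‖ ≤ (t*n : ℕ) := by
  have := norm_le_card_mul (placeR g) 1 zero_le_one
    (fun i j => by rw [placeR]; dsimp; split <;> simp)
  simpa using this

set_option maxHeartbeats 1000000 in
lemma phi_lip (n₁ n₂ t₁ t₂ k r : ℕ) (hk : k ≤ r) (f : Fin t₁ ↪ Fin n₁)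
    (g₁ : Fin k ↪ Fin n₂) (g₂ : Fin (t₂ - k) ↪ Fin n₂) :
    ∀ c : ℝ, 0 ≤ c → ∀ p q : (Fin t₁ × Fin k) ⊕ (Fin k × Fin (t₂ - k)) → ℝ,
      (∀ i, |p i| ≤ 1) → (∀ i, |q i| ≤ 1) → (∀ i, |p i - q i| ≤ c) →
      dist (phiMap n₁ n₂ t₁ t₂ k f g₁ g₂ p) (phiMap n₁ n₂ t₁ t₂ k f g₁ g₂ q)
        ≤ (LNat n₁ n₂ t₁ t₂ r : ℝ) * c := by
  intro c hc p q hp hq hpq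
  set A := placeL f with hA
  set Cp : Matrix (Fin t₁) (Fin k) ℝ := Matrix.of fun i a => p (Sum.inl (i, a)) with hCp
  set Cq : Matrix (Fin t₁) (Fin k) ℝ := Matrix.of fun i a => q (Sum.inl (i, a)) with hCq
  set Wp : Matrix (Fin k) (Fin (t₂ - k)) ℝ := Matrix.of fun a b => p (Sum.inr (a, b)) with hWp
  set Wq : Matrix (Fin k) (Fin (t₂ - k)) ℝ := Matrix.of fun a b => q (Sum.inr (a, b)) with hWq
  set B₁ := placeR g₁ with hB₁
  set B₂ := placeR g₂ with hB₂
  set Mp := B₁ + Wp * B₂ with hMp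
  set Mq := B₁ + Wq * B₂ with hMq
  have key : phiMap n₁ n₂ t₁ t₂ k f g₁ g₂ p - phiMap n₁ n₂ t₁ t₂ k f g₁ g₂ q
      = A * ((Cp - Cq) * Mp + Cq * ((Wp - Wq) * B₂)) := by
    rw [phiMap, phiMap, ← hA, ← hCp, ← hCq, ← hWp, ← hWq, ← hB₁, ← hB₂, ← hMp, ← hMq]
    simp only [Matrix.mul_add, Matrix.add_mul, Matrix.sub_mul, Matrix.mul_sub, hMp, hMq,
      Matrix.mul_assoc]
    abel
  -- norm bounds
  have hnCpq : ‖Cp - Cq‖ ≤ (t₁*k : ℕ) * c :=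
    norm_le_card_mul _ c hc (fun i a => by
      simp only [Matrix.sub_apply, hCp, hCq, Matrix.of_apply]; exact hpq _)
  have hnCq : ‖Cq‖ ≤ (t₁*k : ℕ) * 1 :=
    norm_le_card_mul _ 1 zero_le_one (fun i a => by
      simp only [hCq, Matrix.of_apply]; exact hq _)
  have hnWp : ‖Wp‖ ≤ (k*(t₂-k) : ℕ) * 1 :=
    norm_le_card_mul _ 1 zero_le_one (fun i a => by
      simp only [hWp, Matrix.of_apply]; exact hp _)
  have hnWpq : ‖Wp - Wq‖ ≤ (k*(t₂-k) : ℕ) * c :=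
    norm_le_card_mul _ c hc (fun i a => by
      simp only [Matrix.sub_apply, hWp, hWq, Matrix.of_apply]; exact hpq _)
  have hnA : ‖A‖ ≤ (n₁*t₁ : ℕ) := norm_placeL_le f
  have hnB₁ : ‖B₁‖ ≤ (k*n₂ : ℕ) := norm_placeR_le g₁
  have hnB₂ : ‖B₂‖ ≤ ((t₂-k)*n₂ : ℕ) := norm_placeR_le g₂
  have hnWp' : ‖Wp‖ ≤ ((k*(t₂-k) : ℕ) : ℝ) := by simpa using hnWp
  have hnMp : ‖Mp‖ ≤ (k*n₂ : ℕ) + (k*(t₂-k) : ℕ) * ((t₂-k)*n₂ : ℕ) := by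
    calc ‖Mp‖ ≤ ‖B₁‖ + ‖Wp * B₂‖ := norm_add_le _ _
      _ ≤ ‖B₁‖ + ‖Wp‖ * ‖B₂‖ := add_le_add le_rfl (Matrix.frobenius_norm_mul _ _)
      _ ≤ (k*n₂ : ℕ) + (k*(t₂-k) : ℕ) * ((t₂-k)*n₂ : ℕ) :=
          add_le_add hnB₁ (mul_le_mul hnWp' hnB₂ (norm_nonneg _) (Nat.cast_nonneg _))
  have cast1 : ((t₁*k : ℕ) : ℝ) ≤ ((t₁*r : ℕ) : ℝ) :=
    Nat.cast_le.mpr (Nat.mul_le_mul_left _ hk)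
  have cast2 : ((k*n₂ : ℕ) : ℝ) ≤ ((r*n₂ : ℕ) : ℝ) :=
    Nat.cast_le.mpr (Nat.mul_le_mul_right _ hk)
  have cast3 : ((k*(t₂-k) : ℕ) : ℝ) ≤ ((r*t₂ : ℕ) : ℝ) :=
    Nat.cast_le.mpr (Nat.mul_le_mul hk (Nat.sub_le _ _))
  have cast4 : (((t₂-k)*n₂ : ℕ) : ℝ) ≤ ((t₂*n₂ : ℕ) : ℝ) :=
    Nat.cast_le.mpr (Nat.mul_le_mul_right _ (Nat.sub_le _ _))
  have hnCpq2 : ‖Cp - Cq‖ ≤ ((t₁*r : ℕ) : ℝ) * c :=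
    hnCpq.trans (mul_le_mul_of_nonneg_right cast1 hc)
  have hnCq2 : ‖Cq‖ ≤ ((t₁*r : ℕ) : ℝ) * 1 :=
    hnCq.trans (mul_le_mul_of_nonneg_right cast1 zero_le_one)
  have hnWpq2 : ‖Wp - Wq‖ ≤ ((r*t₂ : ℕ) : ℝ) * c :=
    hnWpq.trans (mul_le_mul_of_nonneg_right cast3 hc)
  have hnB₂2 : ‖B₂‖ ≤ ((t₂*n₂ : ℕ) : ℝ) := hnB₂.trans cast4
  have hnMp2 : ‖Mp‖ ≤ ((r*n₂ : ℕ) : ℝ) + ((r*t₂ : ℕ) : ℝ) * ((t₂*n₂ : ℕ) : ℝ) :=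
    hnMp.trans (add_le_add cast2
      (mul_le_mul cast3 cast4 (Nat.cast_nonneg _) (Nat.cast_nonneg _)))
  have main : dist (phiMap n₁ n₂ t₁ t₂ k f g₁ g₂ p) (phiMap n₁ n₂ t₁ t₂ k f g₁ g₂ q)
      ≤ (n₁*t₁ : ℕ) * (((t₁*r : ℕ) * c) * ((r*n₂ : ℕ) + (r*t₂ : ℕ) * (t₂*n₂ : ℕ))
        + ((t₁*r : ℕ) * 1) * (((r*t₂ : ℕ) * c) * ((t₂*n₂ : ℕ) : ℝ))) := by
    rw [dist_eq_norm, key]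
    calc ‖A * ((Cp - Cq) * Mp + Cq * ((Wp - Wq) * B₂))‖
        ≤ ‖A‖ * ‖(Cp - Cq) * Mp + Cq * ((Wp - Wq) * B₂)‖ := Matrix.frobenius_norm_mul _ _
      _ ≤ ‖A‖ * (‖(Cp - Cq) * Mp‖ + ‖Cq * ((Wp - Wq) * B₂)‖) :=
          mul_le_mul_of_nonneg_left (norm_add_le _ _) (norm_nonneg _)
      _ ≤ ‖A‖ * (‖Cp - Cq‖ * ‖Mp‖ + ‖Cq‖ * ‖(Wp - Wq) * B₂‖) :=
          mul_le_mul_of_nonneg_left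
            (add_le_add (Matrix.frobenius_norm_mul _ _) (Matrix.frobenius_norm_mul _ _))
            (norm_nonneg _)
      _ ≤ ‖A‖ * (‖Cp - Cq‖ * ‖Mp‖ + ‖Cq‖ * (‖Wp - Wq‖ * ‖B₂‖)) :=
          mul_le_mul_of_nonneg_left
            (add_le_add le_rfl
              (mul_le_mul_of_nonneg_left (Matrix.frobenius_norm_mul _ _) (norm_nonneg _)))
            (norm_nonneg _)
      _ ≤ (n₁*t₁ : ℕ) * (((t₁*r : ℕ) * c) * ((r*n₂ : ℕ) + (r*t₂ : ℕ) * (t₂*n₂ : ℕ))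
          + ((t₁*r : ℕ) * 1) * (((r*t₂ : ℕ) * c) * ((t₂*n₂ : ℕ) : ℝ))) := by
          apply mul_le_mul hnA ?_ ?_ (Nat.cast_nonneg _)
          · apply add_le_add
            · exact mul_le_mul hnCpq2 hnMp2 (norm_nonneg _) (by positivity)
            · exact mul_le_mul hnCq2
                (mul_le_mul hnWpq2 hnB₂2 (norm_nonneg _) (by positivity))
                (by positivity) (by positivity)
          · positivity
  calc dist (phiMap n₁ n₂ t₁ t₂ k f g₁ g₂ p) (phiMap n₁ n₂ t₁ t₂ k f g₁ g₂ q)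
      ≤ (n₁*t₁ : ℕ) * (((t₁*r : ℕ) * c) * ((r*n₂ : ℕ) + (r*t₂ : ℕ) * (t₂*n₂ : ℕ))
        + ((t₁*r : ℕ) * 1) * (((r*t₂ : ℕ) * c) * ((t₂*n₂ : ℕ) : ℝ))) := main
    _ = ((LNat n₁ n₂ t₁ t₂ r : ℝ) - 1) * c := by rw [LNat]; push_cast; ring
    _ ≤ (LNat n₁ n₂ t₁ t₂ r : ℝ) * c := mul_le_mul_of_nonneg_right (by linarith) hc

end P4

section P5
open Matrix Finset
lemma exists_embed {n t : ℕ} (S A : Finset (Fin n)) (hSA : S ⊆ A) (hS : S.card ≤ t)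
    (ht : t ≤ A.card) :
    ∃ f : Fin t ↪ Fin n, (∀ x ∈ S, ∃ i, f i = x) ∧ ∀ i, f i ∈ A := by
  obtain ⟨u, h1, h2, h3⟩ := Finset.exists_subsuperset_card_eq hSA hS ht
  let e : ↥u ≃ Fin t := u.equivFinOfCardEq h3
  refine ⟨e.symm.toEmbedding.trans (Function.Embedding.subtype _), ?_, ?_⟩
  · intro x hx
    exact ⟨e ⟨x, h1 hx⟩, by simp⟩
  · intro i
    exact h2 (e.symm i).2

lemma decomp {n₁ n₂ r s₁ s₂ : ℕ} (X : Matrix (Fin n₁) (Fin n₂) ℝ)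
    (hrank : X.rank ≤ r) (hrow : {i | ∃ j, X i j ≠ 0}.ncard ≤ s₁)
    (hcol : {j | ∃ i, X i j ≠ 0}.ncard ≤ s₂) (hnorm : ‖X‖ ≤ 1) :
    ∃ (k : Fin (r+1)) (f : Fin (min s₁ n₁) ↪ Fin n₁) (g₁ : Fin (k:ℕ) ↪ Fin n₂)
      (g₂ : Fin (min s₂ n₂ - (k:ℕ)) ↪ Fin n₂)
      (p : (Fin (min s₁ n₁) × Fin (k:ℕ)) ⊕ (Fin (k:ℕ) × Fin (min s₂ n₂ - (k:ℕ))) → ℝ),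
      (∀ i, |p i| ≤ 1) ∧ X = phiMap n₁ n₂ (min s₁ n₁) (min s₂ n₂) (k:ℕ) f g₁ g₂ p := by
  classical
  obtain ⟨g, hginj, hgne, hgw⟩ := exists_good_basis X
  choose w hw1 hw2 using hgw
  set Rs : Finset (Fin n₁) := {i | ∃ j, X i j ≠ 0}.toFinset with hRs
  set Cs : Finset (Fin n₂) := {j | ∃ i, X i j ≠ 0}.toFinset with hCs
  have hRscard : Rs.card ≤ min s₁ n₁ := by
    apply le_min
    · rw [hRs, ← Set.ncard_eq_toFinset_card']; exact hrow
    · exact (Finset.card_le_univ _).trans (by simp)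
  have hCscard : Cs.card ≤ min s₂ n₂ := by
    apply le_min
    · rw [hCs, ← Set.ncard_eq_toFinset_card']; exact hcol
    · exact (Finset.card_le_univ _).trans (by simp)
  obtain ⟨f, hfcov, -⟩ := exists_embed Rs Finset.univ (Finset.subset_univ _) hRscard
    (by simp [min_le_right])
  set T : Finset (Fin n₂) := Finset.univ.image g with hT
  have hTcard : T.card = X.rank := by
    rw [hT, Finset.card_image_of_injective _ hginj, Finset.card_univ, Fintype.card_fin]
  have hTsub : T ⊆ Cs := by
    intro x hx
    obtain ⟨a, -, rfl⟩ := Finset.mem_image.mp hx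
    rw [hCs, Set.mem_toFinset]
    obtain ⟨i, hi⟩ := Function.ne_iff.mp (hgne a)
    exact ⟨i, hi⟩
  have hkt₂ : X.rank ≤ min s₂ n₂ := by
    calc X.rank = T.card := hTcard.symm
      _ ≤ Cs.card := Finset.card_le_card hTsub
      _ ≤ min s₂ n₂ := hCscard
  obtain ⟨g₂, hg₂cov, hg₂mem⟩ := exists_embed (t := min s₂ n₂ - X.rank) (Cs \ T) Tᶜ
    (fun x hx => Finset.mem_compl.mpr (Finset.mem_sdiff.mp hx).2)
    (by
      rw [Finset.card_sdiff_of_subset hTsub, hTcard]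
      exact Nat.sub_le_sub_right hCscard _)
    (by
      rw [Finset.card_compl, hTcard, Fintype.card_fin]
      exact Nat.sub_le_sub_right (min_le_right s₂ n₂) _)
  set pfun : (Fin (min s₁ n₁) × Fin X.rank) ⊕ (Fin X.rank × Fin (min s₂ n₂ - X.rank)) → ℝ :=
    Sum.elim (fun ia => X (f ia.1) (g ia.2)) (fun ab => w (g₂ ab.2) ab.1) with hpfun
  have hbound : ∀ i, |pfun i| ≤ 1 := by
    rintro (⟨i, a⟩ | ⟨a, b⟩)
    · exact (entry_abs_le_norm X _ _).trans hnorm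
    · exact hw1 _ _
  have hrowzero : ∀ i', (∀ i, f i ≠ i') → ∀ j, X i' j = 0 := by
    intro i' hne j
    by_contra h0
    have : i' ∈ Rs := by rw [hRs, Set.mem_toFinset]; exact ⟨j, h0⟩
    obtain ⟨i, hi⟩ := hfcov i' this
    exact hne i hi
  have hXeq : X = phiMap n₁ n₂ (min s₁ n₁) (min s₂ n₂) X.rank f ⟨g, hginj⟩ g₂ pfun := by
    ext i' j'
    rw [phiMap, Matrix.mul_apply]
    symm
    have hAC : ∀ a, (placeL f * (Matrix.of fun i a => pfun (Sum.inl (i, a)))) i' a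
        = X i' (g a) := by
      intro a
      rw [Matrix.mul_apply]
      by_cases hex : ∃ i, f i = i'
      · obtain ⟨i₀, rfl⟩ := hex
        rw [Finset.sum_eq_single i₀]
        · simp [placeL, hpfun]
        · intro i _ hne
          have : f i ≠ f i₀ := fun h => hne (f.injective h)
          simp [placeL, this]
        · intro h; exact absurd (Finset.mem_univ i₀) h
      · push_neg at hex
        rw [Finset.sum_eq_zero, hrowzero i' hex (g a)]
        intro i _
        simp [placeL, hex i]
    calc ∑ a, (placeL f * (Matrix.of fun i a => pfun (Sum.inl (i, a)))) i' a *
          (placeR ⟨g, hginj⟩ +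
            (Matrix.of fun a b => pfun (Sum.inr (a, b))) * placeR g₂) a j'
        = ∑ a, X i' (g a) * ((if g a = j' then 1 else 0) +
            ∑ b, w (g₂ b) a * (if g₂ b = j' then (1:ℝ) else 0)) := by
          apply Finset.sum_congr rfl
          intro a _
          rw [hAC a, Matrix.add_apply, Matrix.mul_apply]
          simp [placeR, hpfun]
      _ = X i' j' := by
          by_cases hj1 : ∃ a₀, g a₀ = j'
          · obtain ⟨a₀, rfl⟩ := hj1
            have hg₂ne : ∀ b, g₂ b ≠ g a₀ := by
              intro b hb
              have := hg₂mem b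
              rw [Finset.mem_compl] at this
              exact this (hb ▸ Finset.mem_image_of_mem g (Finset.mem_univ a₀))
            have hinner : ∀ a, ∑ b, w (g₂ b) a * (if g₂ b = g a₀ then (1:ℝ) else 0) = 0 := by
              intro a
              apply Finset.sum_eq_zero
              intro b _
              simp [hg₂ne b]
            rw [Finset.sum_congr rfl (fun a _ => by rw [hinner a, add_zero])]
            rw [Finset.sum_eq_single a₀]
            · simp
            · intro a _ hne
              have : g a ≠ g a₀ := fun h => hne (hginj h)
              simp [this]
            · intro h; exact absurd (Finset.mem_univ a₀) h
          · push_neg at hj1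
            have hfirst : ∀ a, (if g a = j' then (1:ℝ) else 0) = 0 := fun a => if_neg (hj1 a)
            by_cases hj2 : ∃ b₀, g₂ b₀ = j'
            · obtain ⟨b₀, rfl⟩ := hj2
              have hinner : ∀ a, ∑ b, w (g₂ b) a * (if g₂ b = g₂ b₀ then (1:ℝ) else 0)
                  = w (g₂ b₀) a := by
                intro a
                rw [Finset.sum_eq_single b₀]
                · simp
                · intro b _ hne
                  have : g₂ b ≠ g₂ b₀ := fun h => hne (g₂.injective h)
                  simp [this]
                · intro h; exact absurd (Finset.mem_univ b₀) h
              rw [Finset.sum_congr rfl (fun a _ => by rw [hinner a, hfirst a, zero_add])]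
              rw [hw2 (g₂ b₀) i']
              exact Finset.sum_congr rfl fun a _ => mul_comm _ _
            · push_neg at hj2
              have hinner : ∀ a, ∑ b, w (g₂ b) a * (if g₂ b = j' then (1:ℝ) else 0) = 0 := by
                intro a
                apply Finset.sum_eq_zero
                intro b _
                simp [hj2 b]
              rw [Finset.sum_congr rfl (fun a _ => by
                rw [hinner a, hfirst a, add_zero, mul_zero])]
              rw [Finset.sum_const_zero]
              symm
              by_contra h0
              have hjCs : j' ∈ Cs := by rw [hCs, Set.mem_toFinset]; exact ⟨i', h0⟩
              have hjT : j' ∉ T := by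
                intro hmem
                obtain ⟨a, -, ha⟩ := Finset.mem_image.mp hmem
                exact hj1 a ha
              obtain ⟨b, hb⟩ := hg₂cov j' (Finset.mem_sdiff.mpr ⟨hjCs, hjT⟩)
              exact hj2 b hb
  exact ⟨⟨X.rank, Nat.lt_succ_of_le hrank⟩, f, ⟨g, hginj⟩, g₂, pfun, hbound, hXeq⟩

end P5

section P6
open Matrix Finset
lemma dim_bound {r s₁ s₂ n₁ n₂ k : ℕ} (hk : k ≤ r) (h₁ : r ≤ s₁) (h₂ : r ≤ s₂) :
    (min s₁ n₁) * k + k * (min s₂ n₂ - k) ≤ (s₁ + s₂ - r) * r := by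
  rcases le_or_gt k (min s₂ n₂) with h | h
  · have h3 : min s₂ n₂ - k ≤ s₂ - k := Nat.sub_le_sub_right (min_le_left _ _) _
    have step1 : (min s₁ n₁) * k + k * (min s₂ n₂ - k) ≤ s₁ * k + k * (s₂ - k) :=
      add_le_add (Nat.mul_le_mul_right _ (min_le_left _ _)) (Nat.mul_le_mul_left _ h3)
    refine step1.trans ?_
    have hks₂ : k ≤ s₂ := h.trans (min_le_left _ _)
    zify [hks₂, (show r ≤ s₁ + s₂ by omega)]
    have c1 : (k:ℤ) ≤ r := by exact_mod_cast hk
    have c2 : (r:ℤ) ≤ s₁ := by exact_mod_cast h₁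
    have c3 : (r:ℤ) ≤ s₂ := by exact_mod_cast h₂
    have c4 : (k:ℤ) ≤ s₂ := by exact_mod_cast hks₂
    nlinarith [mul_nonneg (sub_nonneg.mpr c1)
      (sub_nonneg.mpr (show (r:ℤ) + k ≤ s₁ + s₂ by linarith))]
  · have h0 : min s₂ n₂ - k = 0 := Nat.sub_eq_zero_of_le h.le
    rw [h0, Nat.mul_zero, Nat.add_zero]
    calc (min s₁ n₁) * k ≤ s₁ * r := Nat.mul_le_mul (min_le_left _ _) hk
      _ ≤ (s₁ + s₂ - r) * r := Nat.mul_le_mul_right _ (by omega)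


end P6

open Matrix Finset in
/-- upper Minkowski dimension of the set of rank-`≤ r` matrices with at most
`s₁` nonzero rows and `s₂` nonzero columns in the Frobenius unit ball. -/
theorem minkowski_sparse_lowrank {n₁ n₂ r s₁ s₂ : ℕ} (h₁ : r ≤ s₁) (h₂ : r ≤ s₂) :
    upperMinkowskiDim {X : Matrix (Fin n₁) (Fin n₂) ℝ | X.rank ≤ r ∧
        {i | ∃ j, X i j ≠ 0}.ncard ≤ s₁ ∧ {j | ∃ i, X i j ≠ 0}.ncard ≤ s₂ ∧ ‖X‖ ≤ 1}
      ≤ ((s₁ : ℝ) + s₂ - r) * r := by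
  classical
  have hgoal : ((s₁:ℝ) + s₂ - r) * r = (((s₁ + s₂ - r) * r : ℕ) : ℝ) := by
    rw [Nat.cast_mul, Nat.cast_sub (by omega : r ≤ s₁ + s₂), Nat.cast_add]
  rw [hgoal]
  set t₁ := min s₁ n₁ with ht₁
  set t₂ := min s₂ n₂ with ht₂
  set Dn : ℕ := (s₁ + s₂ - r) * r with hDn
  set L : ℝ := (LNat n₁ n₂ t₁ t₂ r : ℝ) with hLdef
  have hL1 : (1:ℝ) ≤ L := by
    rw [hLdef, LNat]; exact_mod_cast Nat.le_add_left 1 _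
  have hdim : ∀ k : Fin (r+1), t₁ * (k:ℕ) + (k:ℕ) * (t₂ - (k:ℕ)) ≤ Dn := fun k =>
    dim_bound (Nat.lt_succ_iff.mp k.isLt) h₁ h₂
  apply dim_le_of_poly_cover _ Dn
    ((Fintype.card (Σ k : Fin (r+1), (Fin t₁ ↪ Fin n₁) × (Fin (k:ℕ) ↪ Fin n₂) ×
      (Fin (t₂ - (k:ℕ)) ↪ Fin n₂)) : ℝ) + 1) (4*L + 2)
    (le_add_of_nonneg_left (Nat.cast_nonneg _)) (by linarith) ?_ ?_
  · -- nonempty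
    refine ⟨0, ?_⟩
    simp only [Set.mem_setOf_eq]
    refine ⟨by simp [Matrix.rank_zero], ?_, ?_, by simp⟩
    · have : {i | ∃ j, (0 : Matrix (Fin n₁) (Fin n₂) ℝ) i j ≠ 0} = ∅ := by simp
      rw [this]; simp
    · have : {j | ∃ i, (0 : Matrix (Fin n₁) (Fin n₂) ℝ) i j ≠ 0} = ∅ := by simp
      rw [this]; simp
  · intro ρ hρ hρ1
    set M := ⌈4*L/ρ⌉₊ with hM
    have hc : ∀ α : (Σ k : Fin (r+1), (Fin t₁ ↪ Fin n₁) × (Fin (k:ℕ) ↪ Fin n₂) ×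
        (Fin (t₂ - (k:ℕ)) ↪ Fin n₂)), ∃ C : Finset (Matrix (Fin n₁) (Fin n₂) ℝ),
        C.card ≤ (M+1) ^ (Fintype.card ((Fin t₁ × Fin (α.1:ℕ)) ⊕
          (Fin (α.1:ℕ) × Fin (t₂ - (α.1:ℕ))))) ∧
        (phiMap n₁ n₂ t₁ t₂ (α.1:ℕ) α.2.1 α.2.2.1 α.2.2.2 '' {p | ∀ i, |p i| ≤ 1})
          ⊆ ⋃ c ∈ C, Metric.closedBall c ρ := by
      intro α
      exact cover_image_cube _ L ρ hL1 hρ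
        (phi_lip n₁ n₂ t₁ t₂ (α.1:ℕ) r (Nat.lt_succ_iff.mp α.1.isLt) _ _ _)
    choose 𝒞 h𝒞1 h𝒞2 using hc
    refine ⟨Finset.univ.biUnion (fun α => 𝒞 α), ?_, ?_⟩
    · have hcard : (Finset.univ.biUnion (fun α => 𝒞 α)).card
          ≤ Fintype.card (Σ k : Fin (r+1), (Fin t₁ ↪ Fin n₁) × (Fin (k:ℕ) ↪ Fin n₂) ×
            (Fin (t₂ - (k:ℕ)) ↪ Fin n₂)) * (M+1)^Dn := by
        calc (Finset.univ.biUnion (fun α => 𝒞 α)).card ≤ ∑ α, (𝒞 α).card :=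
              Finset.card_biUnion_le
          _ ≤ ∑ _α : (Σ k : Fin (r+1), (Fin t₁ ↪ Fin n₁) × (Fin (k:ℕ) ↪ Fin n₂) ×
              (Fin (t₂ - (k:ℕ)) ↪ Fin n₂)), (M+1)^Dn := by
              apply Finset.sum_le_sum
              intro α _
              refine (h𝒞1 α).trans (Nat.pow_le_pow_right (Nat.succ_le_succ (Nat.zero_le M)) ?_)
              have hcardι : Fintype.card ((Fin t₁ × Fin (α.1:ℕ)) ⊕
                  (Fin (α.1:ℕ) × Fin (t₂ - (α.1:ℕ)))) = t₁ * (α.1:ℕ) + (α.1:ℕ) * (t₂ - (α.1:ℕ)) := by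
                simp
              rw [hcardι]
              exact hdim α.1
          _ = _ := by rw [Finset.sum_const, Finset.card_univ, smul_eq_mul]
      have hMle : ((M+1 : ℕ):ℝ) ≤ (4*L+2)/ρ := by
        push_cast
        have h1 : (M:ℝ) < 4*L/ρ + 1 := by
          rw [hM]; exact Nat.ceil_lt_add_one (by positivity)
        have h2 : (2:ℝ) ≤ 2/ρ := by
          rw [le_div_iff₀ hρ]; nlinarith
        have : 4*L/ρ + 2/ρ = (4*L+2)/ρ := by ring
        linarith
      calc ((Finset.univ.biUnion (fun α => 𝒞 α)).card : ℝ)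
          ≤ (Fintype.card (Σ k : Fin (r+1), (Fin t₁ ↪ Fin n₁) × (Fin (k:ℕ) ↪ Fin n₂) ×
            (Fin (t₂ - (k:ℕ)) ↪ Fin n₂)) : ℝ) * ((M+1 : ℕ):ℝ)^Dn := by
            exact_mod_cast Nat.cast_le.mpr hcard
        _ ≤ ((Fintype.card (Σ k : Fin (r+1), (Fin t₁ ↪ Fin n₁) × (Fin (k:ℕ) ↪ Fin n₂) ×
            (Fin (t₂ - (k:ℕ)) ↪ Fin n₂)) : ℝ) + 1) * ((4*L+2)/ρ)^Dn := by
            apply mul_le_mul (by linarith) (pow_le_pow_left₀ (by positivity) hMle Dn)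
              (by positivity) (by positivity)
    · intro X hX
      obtain ⟨hr, hrw, hcl, hn⟩ := hX
      obtain ⟨k, f, g₁, g₂, p, hp, hXeq⟩ := decomp X hr hrw hcl hn
      have hmem : X ∈ phiMap n₁ n₂ t₁ t₂ (k:ℕ) f g₁ g₂ '' {p | ∀ i, |p i| ≤ 1} :=
        ⟨p, hp, hXeq.symm⟩
      have hXun := h𝒞2 ⟨k, f, g₁, g₂⟩ hmem
      obtain ⟨c, hc1, hc2⟩ := Set.mem_iUnion₂.mp hXun
      exact Set.mem_iUnion₂.mpr ⟨c,
        Finset.mem_biUnion.mpr ⟨⟨k, f, g₁, g₂⟩, Finset.mem_univ _, hc1⟩, hc2⟩
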